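/- Let ω be a weight. (i) If ω ∈ A_p for some p > 1, then ω satisfies the doubling condition. (ii) Conversely, if ω satisfies the doubling condition and there exist C, q > 1 such that ω ∈ RH_q, then there exist a constant C′ and p > 1 such that ω ∈ A_p. -/

import Mathlib

open MeasureTheory Finset


lemma part1_aux (a : ℕ → ℝ) (ha : ∀ i, 0 < a i) (p Cc : ℝ) (hp : 1 < p)
    (hA : ∀ k : ℕ, 0 < k →
      ((k : ℝ)⁻¹ * ∑ i ∈ Finset.range k, a i) *
        ((k : ℝ)⁻¹ * ∑ i ∈ Finset.range k, a i ^ (-(1 / (p - 1)))) ^ (p - 1) ≤ Cc)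
    (k : ℕ) (hk : 2 ≤ k) (J : Finset ℕ) (hJ : J ⊆ Finset.range k) (hJ4 : k ≤ 4 * J.card) :
    (∑ j ∈ J, a j)⁻¹ * ∑ j ∈ Finset.range k, a j ≤ Cc * 4 ^ p := by
  have hp1 : 0 < p - 1 := by linarith
  have hp0 : 0 < p := by linarith
  set s : ℝ := 1 / (p - 1) with hs
  have hsp : (-s) * (p - 1) = -1 := by rw [hs]; field_simp
  have hCc : (1:ℝ) ≤ Cc := by
    have h1 := hA 1 one_pos
    simp only [Nat.cast_one, inv_one, one_mul, Finset.sum_range_one] at h1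
    rw [← Real.rpow_mul (le_of_lt (ha 0)), hsp, Real.rpow_neg_one,
      mul_inv_cancel₀ (ne_of_gt (ha 0))] at h1
    exact h1
  -- notation
  have hk0 : (0:ℝ) < (k:ℝ) := by positivity
  set S : ℝ := ∑ i ∈ Finset.range k, a i with hS
  set S' : ℝ := ∑ i ∈ Finset.range k, a i ^ (-s) with hS'
  set SJ : ℝ := ∑ j ∈ J, a j with hSJ
  have hSpos : 0 < S := Finset.sum_pos (fun i _ => ha i) (by simp; omega)
  have hJcard : 0 < J.card := by omega
  have hSJpos : 0 < SJ := Finset.sum_pos (fun i _ => ha i) (Finset.card_pos.mp hJcard)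
  have hS'pos : 0 < S' := Finset.sum_pos (fun i _ => Real.rpow_pos_of_pos (ha i) _)
    (by simp; omega)
  -- step 1 : S * S'^(p-1) ≤ Cc * k^p
  have step1 : S * S' ^ (p - 1) ≤ Cc * (k:ℝ) ^ p := by
    have h1 := hA k (by omega)
    rw [Real.mul_rpow (by positivity) (le_of_lt hS'pos)] at h1
    have e1 : (k:ℝ)⁻¹ * S * (((k:ℝ)⁻¹) ^ (p-1) * S' ^ (p-1))
        = ((k:ℝ)⁻¹) ^ p * (S * S' ^ (p-1)) := by
      rw [show ((k:ℝ)⁻¹) ^ p = ((k:ℝ)⁻¹) ^ (1 + (p-1)) by ring_nf,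
        Real.rpow_add (by positivity), Real.rpow_one]
      ring
    rw [e1] at h1
    have e2 : ((k:ℝ)⁻¹) ^ p = ((k:ℝ) ^ p)⁻¹ := by
      rw [← Real.rpow_neg_one (k:ℝ), ← Real.rpow_mul (le_of_lt hk0), neg_one_mul,
        Real.rpow_neg (le_of_lt hk0)]
    rw [e2, inv_mul_le_iff₀ (by positivity)] at h1
    linarith [h1]
  -- step 2 : Hölder
  set p' : ℝ := p / (p - 1) with hp'
  have hpq : Real.HolderConjugate p p' := Real.HolderConjugate.conjExponent hp
  have holder : (J.card : ℝ) ≤ SJ ^ (1/p) * S' ^ (1/p') := by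
    have h2 := Real.inner_le_Lp_mul_Lq_of_nonneg J
      (f := fun i => a i ^ (1/p)) (g := fun i => a i ^ (-(1/p))) hpq
      (fun i _ => le_of_lt (Real.rpow_pos_of_pos (ha i) _))
      (fun i _ => le_of_lt (Real.rpow_pos_of_pos (ha i) _))
    have e3 : ∀ i, a i ^ (1/p) * a i ^ (-(1/p)) = 1 := by
      intro i
      rw [← Real.rpow_add (ha i)]
      simp
    have e4 : ∀ i, (a i ^ (1/p)) ^ p = a i := by
      intro i
      rw [← Real.rpow_mul (ha i).le, one_div_mul_cancel (ne_of_gt hp0),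
        Real.rpow_one]
    have e5 : ∀ i, (a i ^ (-(1/p))) ^ p' = a i ^ (-s) := by
      intro i
      rw [← Real.rpow_mul (ha i).le]
      congr 1
      rw [hp', hs]
      field_simp
    simp only [e3, Finset.sum_const, nsmul_eq_mul, mul_one, e4, e5] at h2
    calc (J.card : ℝ) ≤ (∑ i ∈ J, a i) ^ (1/p) * (∑ i ∈ J, a i ^ (-s)) ^ (1/p') := h2
      _ ≤ SJ ^ (1/p) * S' ^ (1/p') := by
          apply mul_le_mul_of_nonneg_left _ (Real.rpow_nonneg hSJpos.le _)
          apply Real.rpow_le_rpow (Finset.sum_nonneg fun i _ => (Real.rpow_pos_of_pos (ha i) _).le) _ (one_div_pos.mpr hpq.symm.pos).le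
          exact Finset.sum_le_sum_of_subset_of_nonneg hJ
            (fun i _ _ => le_of_lt (Real.rpow_pos_of_pos (ha i) _))
  -- step 3 : card^p ≤ SJ * S'^(p-1)
  have step3 : (J.card : ℝ) ^ p ≤ SJ * S' ^ (p - 1) := by
    calc (J.card : ℝ) ^ p ≤ (SJ ^ (1/p) * S' ^ (1/p')) ^ p :=
          Real.rpow_le_rpow (by positivity) holder (le_of_lt hp0)
      _ = SJ * S' ^ (p-1) := by
          rw [Real.mul_rpow (by positivity) (by positivity),
            ← Real.rpow_mul hSJpos.le, ← Real.rpow_mul hS'pos.le,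
            one_div_mul_cancel (ne_of_gt hp0), Real.rpow_one]
          congr 2
          rw [hp']
          field_simp
  -- combine
  have hcard : (0:ℝ) < (J.card:ℝ) ^ p := Real.rpow_pos_of_pos (by positivity) _
  have key : S * (J.card:ℝ) ^ p ≤ SJ * (Cc * (k:ℝ) ^ p) := by
    calc S * (J.card:ℝ) ^ p ≤ S * (SJ * S' ^ (p-1)) :=
          mul_le_mul_of_nonneg_left step3 (le_of_lt hSpos)
      _ = SJ * (S * S' ^ (p-1)) := by ring
      _ ≤ SJ * (Cc * (k:ℝ) ^ p) := mul_le_mul_of_nonneg_left step1 (le_of_lt hSJpos)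
  have hratio : (k:ℝ) ^ p ≤ 4 ^ p * (J.card:ℝ) ^ p := by
    rw [← Real.mul_rpow (by norm_num) (by positivity)]
    apply Real.rpow_le_rpow (le_of_lt hk0) _ (le_of_lt hp0)
    exact_mod_cast hJ4
  rw [inv_mul_le_iff₀ hSJpos]
  have final : S * (J.card:ℝ) ^ p ≤ SJ * (Cc * 4 ^ p) * (J.card:ℝ) ^ p := by
    calc S * (J.card:ℝ) ^ p ≤ SJ * (Cc * (k:ℝ) ^ p) := key
      _ ≤ SJ * (Cc * (4 ^ p * (J.card:ℝ) ^ p)) := by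
          apply mul_le_mul_of_nonneg_left _ hSJpos.le
          exact mul_le_mul_of_nonneg_left hratio (by linarith)
      _ = SJ * (Cc * 4 ^ p) * (J.card:ℝ) ^ p := by ring
  exact le_of_mul_le_mul_right final hcard


open Classical in
noncomputable def stopSet (a : ℕ → ℝ) (l : ℝ) : ℕ → ℕ → Finset ℕ
  | m, k =>
    if ∑ i ∈ Finset.Ico m (m+k), a i ≤ l * k then Finset.Ico m (m+k)
    else if k < 2 then (∅ : Finset ℕ)
    else
      stopSet a l m ((k-1)/2+1) ∪ stopSet a l (m + ((k-1)/2+1)) (k - ((k-1)/2+1))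
  termination_by m k => k
  decreasing_by all_goals omega

lemma stopSet_subset (a : ℕ → ℝ) (l : ℝ) : ∀ k m, stopSet a l m k ⊆ Finset.Ico m (m+k) := by
  intro k
  induction k using Nat.strong_induction_on with
  | _ k ih =>
    intro m
    rw [stopSet]
    split
    · exact subset_rfl
    · split
      · exact Finset.empty_subset _
      · next h1 h2 =>
        apply Finset.union_subset
        · exact (ih _ (by omega) _).trans (Finset.Ico_subset_Ico le_rfl (by omega))
        · refine (ih _ (by omega) _).trans (Finset.Ico_subset_Ico (by omega) (by omega))

lemma stopSet_disj (a : ℕ → ℝ) (l : ℝ) (m k : ℕ) (hk : ¬ k < 2) :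
    Disjoint (stopSet a l m ((k-1)/2+1)) (stopSet a l (m + ((k-1)/2+1)) (k - ((k-1)/2+1))) := by
  apply Finset.disjoint_left.mpr
  intro i hi1 hi2
  have h1 := stopSet_subset a l _ _ hi1
  have h2 := stopSet_subset a l _ _ hi2
  rw [Finset.mem_Ico] at h1 h2
  omega

lemma stopSet_sum_le (a : ℕ → ℝ) (l : ℝ) : ∀ k m,
    ∑ i ∈ stopSet a l m k, a i ≤ l * (stopSet a l m k).card := by
  intro k
  induction k using Nat.strong_induction_on with
  | _ k ih =>
    intro m
    rw [stopSet]
    split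
    · next h => simpa [Nat.card_Ico] using h
    · split
      · simp
      · next h1 h2 =>
        rw [Finset.sum_union (stopSet_disj a l m k h2),
          Finset.card_union_of_disjoint (stopSet_disj a l m k h2)]
        push_cast
        have := ih ((k-1)/2+1) (by omega) m
        have := ih (k - ((k-1)/2+1)) (by omega) (m + ((k-1)/2+1))
        linarith

lemma mem_stopSet (a : ℕ → ℝ) (l : ℝ) : ∀ k m i, i ∈ Finset.Ico m (m+k) → a i ≤ l →
    i ∈ stopSet a l m k := by
  intro k
  induction k using Nat.strong_induction_on with
  | _ k ih =>
    intro m i hi hai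
    rw [stopSet]
    split
    · exact hi
    · next hst =>
      split
      · next hk2 =>
        exfalso
        rw [Finset.mem_Ico] at hi
        have hk1 : k = 1 := by omega
        subst hk1
        have him : i = m := by omega
        apply hst
        rw [Nat.Ico_succ_singleton, Finset.sum_singleton]
        simp only [Nat.cast_one, mul_one]
        rw [← him]
        exact hai
      · next hk2 =>
        rw [Finset.mem_union]
        rw [Finset.mem_Ico] at hi
        by_cases hcase : i < m + ((k-1)/2+1)
        · exact Or.inl (ih _ (by omega) m i (Finset.mem_Ico.mpr (by omega)) hai)
        · exact Or.inr (ih _ (by omega) _ i (Finset.mem_Ico.mpr (by omega)) hai)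

lemma step_est (a : ℕ → ℝ) (C q : ℝ) (hC : 1 < C) (hq : 1 < q) (ha : ∀ i, 0 < a i)
    (hRH : ∀ m k : ℕ, 0 < k →
      ((k:ℝ)⁻¹ * ∑ i ∈ Finset.Ico m (m+k), a i ^ q) ^ (1/q) ≤
        C * ((k:ℝ)⁻¹ * ∑ i ∈ Finset.Ico m (m+k), a i))
    (m k : ℕ) (hk : 0 < k) (E : Finset ℕ) (hE : E ⊆ Finset.Ico m (m+k))
    (hmass : ∑ i ∈ E, a i ≤ (∑ i ∈ Finset.Ico m (m+k), a i) / 2) :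
    (E.card : ℝ) ≤ (1 - ((2*C) ^ (q/(q-1)))⁻¹) * k := by
  have hq1 : 0 < q - 1 := by linarith
  have hq0 : 0 < q := by linarith
  set q' : ℝ := q / (q - 1) with hq'def
  have hq'pos : 0 < q' := by positivity
  have hqq' : Real.HolderConjugate q' q := (Real.HolderConjugate.conjExponent hq).symm
  have hk0 : (0:ℝ) < (k:ℝ) := by positivity
  set ν : ℝ := ∑ i ∈ Finset.Ico m (m+k), a i with hν
  have hνpos : 0 < ν := Finset.sum_pos (fun i _ => ha i) (by rw [Finset.nonempty_Ico]; omega)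
  set F : Finset ℕ := Finset.Ico m (m+k) \ E with hF
  have hFsub : F ⊆ Finset.Ico m (m+k) := Finset.sdiff_subset
  have hEk : E.card ≤ k := by
    have := Finset.card_le_card hE
    rwa [Nat.card_Ico, Nat.add_sub_cancel_left] at this
  have hcards : (F.card : ℝ) = (k:ℝ) - E.card := by
    rw [hF, Finset.card_sdiff_of_subset hE, Nat.card_Ico, Nat.add_sub_cancel_left,
      Nat.cast_sub hEk]
  have hF0 : (0:ℝ) ≤ (F.card:ℝ) := by positivity
  have hsplit : ∑ i ∈ F, a i + ∑ i ∈ E, a i = ν := Finset.sum_sdiff hE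
  have hF2 : ν / 2 ≤ ∑ i ∈ F, a i := by linarith
  have hSqnn : (0:ℝ) ≤ ∑ i ∈ Finset.Ico m (m+k), a i ^ q :=
    Finset.sum_nonneg fun i _ => (Real.rpow_pos_of_pos (ha i) q).le
  -- Hölder on F
  have h2 := Real.inner_le_Lp_mul_Lq_of_nonneg F (f := fun _ => (1:ℝ)) (g := a) hqq'
    (fun i _ => zero_le_one) (fun i _ => (ha i).le)
  simp only [one_mul, Real.one_rpow, Finset.sum_const, nsmul_eq_mul, mul_one] at h2
  -- monotone in the q-sum
  have h3 : (∑ i ∈ F, a i ^ q) ^ ((1:ℝ)/q) ≤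
      (∑ i ∈ Finset.Ico m (m+k), a i ^ q) ^ ((1:ℝ)/q) := by
    apply Real.rpow_le_rpow (Finset.sum_nonneg fun i _ => (Real.rpow_pos_of_pos (ha i) q).le)
      _ (by positivity)
    exact Finset.sum_le_sum_of_subset_of_nonneg hFsub
      (fun i _ _ => (Real.rpow_pos_of_pos (ha i) q).le)
  -- RH bound
  have h4 : (∑ i ∈ Finset.Ico m (m+k), a i ^ q) ^ ((1:ℝ)/q) ≤
      (k:ℝ) ^ ((1:ℝ)/q) * (C * ((k:ℝ)⁻¹ * ν)) := by
    have e : (∑ i ∈ Finset.Ico m (m+k), a i ^ q)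
        = (k:ℝ) * ((k:ℝ)⁻¹ * ∑ i ∈ Finset.Ico m (m+k), a i ^ q) := by
      field_simp
    rw [e, Real.mul_rpow hk0.le (by positivity)]
    exact mul_le_mul_of_nonneg_left (hRH m k hk) (Real.rpow_nonneg hk0.le _)
  have chain : ν/2 ≤ (F.card:ℝ) ^ ((1:ℝ)/q') * ((k:ℝ) ^ ((1:ℝ)/q) * (C * ((k:ℝ)⁻¹ * ν))) := by
    calc ν/2 ≤ ∑ i ∈ F, a i := hF2
      _ ≤ (F.card:ℝ) ^ ((1:ℝ)/q') * (∑ i ∈ F, a i ^ q) ^ ((1:ℝ)/q) := h2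
      _ ≤ _ := by
          apply mul_le_mul_of_nonneg_left (h3.trans h4) (Real.rpow_nonneg hF0 _)
  -- identify the k-powers
  have h5 : ((k:ℝ) ^ ((1:ℝ)/q) * (k:ℝ)⁻¹) * (k:ℝ) ^ ((1:ℝ)/q') = 1 := by
    rw [mul_right_comm, mul_comm ((k:ℝ) ^ ((1:ℝ)/q)), ← Real.rpow_add hk0,
      show (1:ℝ)/q' + 1/q = 1 by rw [one_div, one_div]; exact hqq'.inv_add_inv_eq_one,
      Real.rpow_one]
    field_simp
  have h6 : (k:ℝ) ^ ((1:ℝ)/q) * (k:ℝ)⁻¹ = ((k:ℝ) ^ ((1:ℝ)/q'))⁻¹ :=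
    eq_inv_of_mul_eq_one_left (by rw [mul_comm]; rw [mul_comm] at h5; exact h5)
  set t : ℝ := ((F.card:ℝ)/(k:ℝ)) ^ ((1:ℝ)/q') with ht
  have ht0 : 0 ≤ t := Real.rpow_nonneg (by positivity) _
  have e2 : (F.card:ℝ) ^ ((1:ℝ)/q') * ((k:ℝ) ^ ((1:ℝ)/q) * (k:ℝ)⁻¹) = t := by
    rw [h6, ht, Real.div_rpow hF0 hk0.le]
    ring
  have hCt : (1:ℝ)/2 ≤ C * t := by
    have e3 : (F.card:ℝ) ^ ((1:ℝ)/q') * ((k:ℝ) ^ ((1:ℝ)/q) * (C * ((k:ℝ)⁻¹ * ν)))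
        = (C * ((F.card:ℝ) ^ ((1:ℝ)/q') * ((k:ℝ) ^ ((1:ℝ)/q) * (k:ℝ)⁻¹))) * ν := by ring
    rw [e3, e2] at chain
    nlinarith [hνpos]
  have key2 : (2*C)⁻¹ ≤ t := by
    rw [inv_eq_one_div, div_le_iff₀ (by positivity : (0:ℝ) < 2*C)]
    linarith
  have key3 : ((2*C) ^ (q/(q-1)))⁻¹ ≤ (F.card:ℝ)/(k:ℝ) := by
    have h7 := Real.rpow_le_rpow (by positivity) key2 hq'pos.le
    rw [ht, ← Real.rpow_mul (by positivity), one_div_mul_cancel (ne_of_gt hq'pos),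
      Real.rpow_one, Real.inv_rpow (by positivity : (0:ℝ) ≤ 2*C)] at h7
    exact h7
  have key4 : ((2*C) ^ (q/(q-1)))⁻¹ * (k:ℝ) ≤ (F.card:ℝ) :=
    (le_div_iff₀ hk0).mp key3
  linarith [hcards, key4]

lemma main_card (a : ℕ → ℝ) (C q D : ℝ) (hC : 1 < C) (hq : 1 < q) (hD : 2 ≤ D)
    (ha : ∀ i, 0 < a i)
    (hRH : ∀ m k : ℕ, 0 < k →
      ((k:ℝ)⁻¹ * ∑ i ∈ Finset.Ico m (m+k), a i ^ q) ^ (1/q) ≤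
        C * ((k:ℝ)⁻¹ * ∑ i ∈ Finset.Ico m (m+k), a i))
    (hDoub : ∀ m k : ℕ, 2 ≤ k →
      (∑ i ∈ Finset.Ico m (m+k), a i) ≤ D * ∑ i ∈ Finset.Ico m (m+((k-1)/2+1)), a i ∧
      (∑ i ∈ Finset.Ico m (m+k), a i) ≤ D * ∑ i ∈ Finset.Ico (m+((k-1)/2+1)) (m+k), a i) :
    ∀ (k m : ℕ) (l l' : ℝ), 0 < l' → 2*D*l' ≤ l →
      2*l'*(k:ℝ) ≤ ∑ i ∈ Finset.Ico m (m+k), a i →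
      ((stopSet a l' m k).card : ℝ) ≤
        (1 - ((2*C) ^ (q/(q-1)))⁻¹) * ((stopSet a l m k).card : ℝ) := by
  have h2C : (0:ℝ) < 2*C := by linarith
  have hη0 : 0 < ((2*C) ^ (q/(q-1)))⁻¹ := by
    rw [inv_pos]; exact Real.rpow_pos_of_pos h2C _
  have hη1 : ((2*C) ^ (q/(q-1)))⁻¹ ≤ 1 := by
    rw [inv_le_one_iff₀]
    right
    calc (1:ℝ) = (2*C) ^ (0:ℝ) := (Real.rpow_zero _).symm
      _ ≤ (2*C) ^ (q/(q-1)) := Real.rpow_le_rpow_of_exponent_le (by linarith)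
          (div_nonneg (by linarith) (by linarith))
  intro k
  induction k using Nat.strong_induction_on with
  | _ k ih =>
    intro m l l' hl' hll' hmass
    by_cases hk0 : k = 0
    · subst hk0
      have h1 : stopSet a l' m 0 = ∅ := by
        have := stopSet_subset a l' 0 m
        simpa using this
      rw [h1]
      simp only [Finset.card_empty, Nat.cast_zero]
      exact mul_nonneg (by linarith) (Nat.cast_nonneg _)
    have hkpos : 0 < k := Nat.pos_of_ne_zero hk0
    have hl'l : l' ≤ l := by nlinarith
    by_cases hst : ∑ i ∈ Finset.Ico m (m+k), a i ≤ l * k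
    · -- stopped at level l
      have hstopl : stopSet a l m k = Finset.Ico m (m+k) := by
        rw [stopSet, if_pos hst]
      rw [hstopl, Nat.card_Ico, Nat.add_sub_cancel_left]
      have hcardk : ((stopSet a l' m k).card : ℝ) ≤ k := by
        have := Finset.card_le_card (stopSet_subset a l' k m)
        rw [Nat.card_Ico, Nat.add_sub_cancel_left] at this
        exact_mod_cast this
      apply step_est a C q hC hq ha hRH m k hkpos _ (stopSet_subset a l' k m)
      calc ∑ i ∈ stopSet a l' m k, a i ≤ l' * (stopSet a l' m k).card :=
            stopSet_sum_le a l' k m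
        _ ≤ l' * k := mul_le_mul_of_nonneg_left hcardk hl'.le
        _ ≤ (∑ i ∈ Finset.Ico m (m+k), a i) / 2 := by linarith
    · -- not stopped at level l
      have hν : l * k < ∑ i ∈ Finset.Ico m (m+k), a i := lt_of_not_ge hst
      have hst' : ¬ (∑ i ∈ Finset.Ico m (m+k), a i ≤ l' * k) := by
        push_neg
        have : l' * k ≤ l * k := by
          apply mul_le_mul_of_nonneg_right hl'l (by positivity)
        linarith
      by_cases hk2 : k < 2
      · rw [stopSet, if_neg hst', if_pos hk2, stopSet, if_neg hst, if_pos hk2]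
        simp
      · have hstl : stopSet a l m k =
            stopSet a l m ((k-1)/2+1) ∪ stopSet a l (m + ((k-1)/2+1)) (k - ((k-1)/2+1)) := by
          rw [stopSet, if_neg hst, if_neg hk2]
        have hstl' : stopSet a l' m k =
            stopSet a l' m ((k-1)/2+1) ∪ stopSet a l' (m + ((k-1)/2+1)) (k - ((k-1)/2+1)) := by
          rw [stopSet, if_neg hst', if_neg hk2]
        rw [hstl, hstl', Finset.card_union_of_disjoint (stopSet_disj a l m k hk2),
          Finset.card_union_of_disjoint (stopSet_disj a l' m k hk2)]
        push_cast
        obtain ⟨hdl, hdr⟩ := hDoub m k (by omega)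
        have hD0 : (0:ℝ) < D := by linarith
        have hhk : ((k-1)/2+1 : ℕ) ≤ k := by omega
        have hhkR : (((k-1)/2+1 : ℕ) : ℝ) ≤ (k:ℝ) := by exact_mod_cast hhk
        have hkhk : ((k - ((k-1)/2+1) : ℕ) : ℝ) ≤ (k:ℝ) := by
          have : (k - ((k-1)/2+1) : ℕ) ≤ k := by omega
          exact_mod_cast this
        have hmassL : 2*l'*(((k-1)/2+1 : ℕ):ℝ) ≤ ∑ i ∈ Finset.Ico m (m + ((k-1)/2+1)), a i := by
          have h1 : (∑ i ∈ Finset.Ico m (m+k), a i) / D ≤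
              ∑ i ∈ Finset.Ico m (m + ((k-1)/2+1)), a i := by
            rw [div_le_iff₀ hD0]
            linarith [hdl]
          have h2 : 2*l'*(k:ℝ) ≤ (∑ i ∈ Finset.Ico m (m+k), a i) / D := by
            rw [le_div_iff₀ hD0]
            nlinarith [hν, mul_le_mul_of_nonneg_right hll' (le_of_lt (by positivity : (0:ℝ) < (k:ℝ)))]
          have h3 : 2*l'*(((k-1)/2+1 : ℕ):ℝ) ≤ 2*l'*(k:ℝ) := by nlinarith
          linarith
        have hmassR : 2*l'*(((k - ((k-1)/2+1) : ℕ)):ℝ) ≤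
            ∑ i ∈ Finset.Ico (m + ((k-1)/2+1)) ((m + ((k-1)/2+1)) + (k - ((k-1)/2+1))), a i := by
          have heq : (m + ((k-1)/2+1)) + (k - ((k-1)/2+1)) = m + k := by omega
          rw [heq]
          have h1 : (∑ i ∈ Finset.Ico m (m+k), a i) / D ≤
              ∑ i ∈ Finset.Ico (m + ((k-1)/2+1)) (m+k), a i := by
            rw [div_le_iff₀ hD0]
            linarith [hdr]
          have h2 : 2*l'*(k:ℝ) ≤ (∑ i ∈ Finset.Ico m (m+k), a i) / D := by
            rw [le_div_iff₀ hD0]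
            nlinarith [hν, mul_le_mul_of_nonneg_right hll' (le_of_lt (by positivity : (0:ℝ) < (k:ℝ)))]
          have h3 : 2*l'*((k - ((k-1)/2+1) : ℕ):ℝ) ≤ 2*l'*(k:ℝ) := by nlinarith
          linarith
        have ihL := ih ((k-1)/2+1) (by omega) m l l' hl' hll' hmassL
        have ihR := ih (k - ((k-1)/2+1)) (by omega) (m + ((k-1)/2+1)) l l' hl' hll' hmassR
        rw [mul_add]
        exact add_le_add ihL ihR

lemma distribution (a : ℕ → ℝ) (C q D : ℝ) (hC : 1 < C) (hq : 1 < q) (hD : 2 ≤ D)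
    (ha : ∀ i, 0 < a i)
    (hRH : ∀ m k : ℕ, 0 < k →
      ((k:ℝ)⁻¹ * ∑ i ∈ Finset.Ico m (m+k), a i ^ q) ^ (1/q) ≤
        C * ((k:ℝ)⁻¹ * ∑ i ∈ Finset.Ico m (m+k), a i))
    (hDoub : ∀ m k : ℕ, 2 ≤ k →
      (∑ i ∈ Finset.Ico m (m+k), a i) ≤ D * ∑ i ∈ Finset.Ico m (m+((k-1)/2+1)), a i ∧
      (∑ i ∈ Finset.Ico m (m+k), a i) ≤ D * ∑ i ∈ Finset.Ico (m+((k-1)/2+1)) (m+k), a i)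
    (k : ℕ) (hk : 0 < k) (n : ℕ) :
    (((Finset.range k).filter
        (fun i => a i ≤ ((k:ℝ)⁻¹ * ∑ j ∈ Finset.range k, a j) * ((2*D)⁻¹)^n)).card : ℝ) ≤
      (1 - ((2*C) ^ (q/(q-1)))⁻¹)^n * k := by
  have hD0 : (0:ℝ) < D := by linarith
  have h2C : (0:ℝ) < 2*C := by linarith
  have hη0 : 0 < ((2*C) ^ (q/(q-1)))⁻¹ := by
    rw [inv_pos]; exact Real.rpow_pos_of_pos h2C _
  have hη1 : ((2*C) ^ (q/(q-1)))⁻¹ ≤ 1 := by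
    rw [inv_le_one_iff₀]
    right
    calc (1:ℝ) = (2*C) ^ (0:ℝ) := (Real.rpow_zero _).symm
      _ ≤ (2*C) ^ (q/(q-1)) := Real.rpow_le_rpow_of_exponent_le (by linarith)
          (div_nonneg (by linarith) (by linarith))
  have hβ0 : (0:ℝ) < (2*D)⁻¹ := by positivity
  have hβ1 : ((2*D):ℝ)⁻¹ ≤ 1/4 := by
    rw [inv_le_comm₀ (by linarith) (by norm_num)]
    norm_num
    linarith
  have hsum_eq : ∑ j ∈ Finset.range k, a j = ∑ i ∈ Finset.Ico 0 (0+k), a i := by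
    rw [Finset.range_eq_Ico, zero_add]
  set A : ℝ := (k:ℝ)⁻¹ * ∑ j ∈ Finset.range k, a j with hA
  have hk0 : (0:ℝ) < (k:ℝ) := by positivity
  have hνpos : 0 < ∑ i ∈ Finset.Ico 0 (0+k), a i :=
    Finset.sum_pos (fun i _ => ha i) (by rw [Finset.nonempty_Ico]; omega)
  have hA0 : 0 < A := by
    rw [hA, hsum_eq]
    positivity
  have hAk : A * k = ∑ i ∈ Finset.Ico 0 (0+k), a i := by
    rw [hA, hsum_eq]
    field_simp
  have hstops : ∀ n : ℕ, ((stopSet a (A * ((2*D)⁻¹)^n) 0 k).card : ℝ) ≤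
      (1 - ((2*C) ^ (q/(q-1)))⁻¹)^n * k := by
    intro n
    induction n with
    | zero =>
      simp only [pow_zero, one_mul]
      have := Finset.card_le_card (stopSet_subset a (A * ((2*D)⁻¹)^0) k 0)
      rw [Nat.card_Ico] at this
      simp only [Nat.zero_add, Nat.add_sub_cancel_left] at this
      exact_mod_cast this
    | succ n ihn =>
      have hcond : 2*D*(A * ((2*D)⁻¹)^(n+1)) = A * ((2*D)⁻¹)^n := by
        have h1 : ((2*D):ℝ) * (2*D)⁻¹ = 1 := mul_inv_cancel₀ (by linarith)
        calc 2*D*(A * ((2*D)⁻¹)^(n+1)) = A * ((2*D)⁻¹)^n * (2*D*(2*D)⁻¹) := by ring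
          _ = A * ((2*D)⁻¹)^n := by rw [h1, mul_one]
      have hmassc : 2*(A * ((2*D)⁻¹)^(n+1))*(k:ℝ) ≤ ∑ i ∈ Finset.Ico 0 (0+k), a i := by
        have hp1 : ((2*D):ℝ)⁻¹^(n+1) ≤ (2*D)⁻¹^1 :=
          pow_le_pow_of_le_one hβ0.le (by linarith) (by omega)
        rw [pow_one] at hp1
        have : 2*(A * ((2*D)⁻¹)^(n+1))*(k:ℝ) ≤ 2*(A * (2*D)⁻¹)*(k:ℝ) := by
          have := mul_le_mul_of_nonneg_left hp1 hA0.le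
          nlinarith
        calc 2*(A * ((2*D)⁻¹)^(n+1))*(k:ℝ) ≤ 2*(A * (2*D)⁻¹)*(k:ℝ) := this
          _ ≤ (1/2) * (A * k) := by nlinarith
          _ ≤ A * k := by nlinarith
          _ = _ := hAk
      have step := main_card a C q D hC hq hD ha hRH hDoub k 0
        (A * ((2*D)⁻¹)^n) (A * ((2*D)⁻¹)^(n+1)) (by positivity) hcond.le hmassc
      calc ((stopSet a (A * ((2*D)⁻¹)^(n+1)) 0 k).card : ℝ)
          ≤ (1 - ((2*C) ^ (q/(q-1)))⁻¹) * ((stopSet a (A * ((2*D)⁻¹)^n) 0 k).card : ℝ) := step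
        _ ≤ (1 - ((2*C) ^ (q/(q-1)))⁻¹) * ((1 - ((2*C) ^ (q/(q-1)))⁻¹)^n * k) :=
            mul_le_mul_of_nonneg_left ihn (by linarith)
        _ = (1 - ((2*C) ^ (q/(q-1)))⁻¹)^(n+1) * k := by ring
  refine le_trans ?_ (hstops n)
  have hsubset : (Finset.range k).filter (fun i => a i ≤ A * ((2*D)⁻¹)^n) ⊆
      stopSet a (A * ((2*D)⁻¹)^n) 0 k := by
    intro i hi
    rw [Finset.mem_filter, Finset.mem_range] at hi
    exact mem_stopSet a _ k 0 i (Finset.mem_Ico.mpr (by omega)) hi.2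
  exact_mod_cast Finset.card_le_card hsubset

set_option maxHeartbeats 1000000 in
theorem part2_abstract (C q D : ℝ) (hC : 1 < C) (hq : 1 < q) (hD : 2 ≤ D) :
    ∃ C' p : ℝ, 1 < p ∧ ∀ a : ℕ → ℝ, (∀ i, 0 < a i) →
      (∀ m k : ℕ, 0 < k →
        ((k:ℝ)⁻¹ * ∑ i ∈ Finset.Ico m (m+k), a i ^ q) ^ (1/q) ≤
          C * ((k:ℝ)⁻¹ * ∑ i ∈ Finset.Ico m (m+k), a i)) →
      (∀ m k : ℕ, 2 ≤ k →
        (∑ i ∈ Finset.Ico m (m+k), a i) ≤ D * ∑ i ∈ Finset.Ico m (m+((k-1)/2+1)), a i ∧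
        (∑ i ∈ Finset.Ico m (m+k), a i) ≤ D * ∑ i ∈ Finset.Ico (m+((k-1)/2+1)) (m+k), a i) →
      ∀ k : ℕ, 0 < k →
        ((k:ℝ)⁻¹ * ∑ i ∈ Finset.range k, a i) *
          ((k:ℝ)⁻¹ * ∑ i ∈ Finset.range k, a i ^ (-(1/(p-1)))) ^ (p-1) ≤ C' := by
  have h2C : (0:ℝ) < 2*C := by linarith
  have hD0 : (0:ℝ) < D := by linarith
  have h2D1 : (1:ℝ) < 2*D := by linarith
  set η : ℝ := ((2*C) ^ (q/(q-1)))⁻¹ with hηdef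
  have hη0 : 0 < η := by rw [hηdef, inv_pos]; exact Real.rpow_pos_of_pos h2C _
  have hη1 : η < 1 := by
    rw [hηdef]
    rw [inv_lt_one_iff₀]
    right
    exact (Real.one_lt_rpow_iff_of_pos h2C).mpr
      (Or.inl ⟨by linarith, div_pos (by linarith) (by linarith)⟩)
  have h1η0 : 0 < 1 - η := by linarith
  set u : ℝ := (1 - η)⁻¹ with hudef
  have hu : 1 < u := by
    rw [hudef, one_lt_inv_iff₀]
    exact ⟨h1η0, by linarith⟩
  have hlog2D : 0 < Real.log (2*D) := Real.log_pos h2D1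
  have hlogu : 0 < Real.log u := Real.log_pos hu
  set s : ℝ := Real.log u / (2 * Real.log (2*D)) with hsdef
  have hs0 : 0 < s := by positivity
  set r : ℝ := (2*D) ^ s with hrdef
  have hr1 : 1 < r := by
    rw [hrdef]
    exact (Real.one_lt_rpow_iff_of_pos (by linarith)).mpr (Or.inl ⟨h2D1, hs0⟩)
  have hru : r < u := by
    rw [hrdef, Real.rpow_def_of_pos (by linarith)]
    have e : Real.log (2*D) * s = Real.log u / 2 := by
      rw [hsdef]
      field_simp
    rw [e]
    calc Real.exp (Real.log u / 2) < Real.exp (Real.log u) :=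
          Real.exp_lt_exp.mpr (by linarith)
      _ = u := Real.exp_log (by linarith)
  set ρ : ℝ := r * (1 - η) with hρdef
  have hρ0 : 0 ≤ ρ := by rw [hρdef]; nlinarith
  have hρ1 : ρ < 1 := by
    rw [hρdef]
    calc r * (1-η) < u * (1-η) := mul_lt_mul_of_pos_right hru h1η0
      _ = 1 := by rw [hudef]; exact inv_mul_cancel₀ (by linarith)
  have h1ρ0 : 0 < 1 - ρ := by linarith
  set K0 : ℝ := 1 + (r - 1) / (1 - ρ) with hK0def
  have hK01 : 1 ≤ K0 := le_add_of_nonneg_right (div_nonneg (by linarith) (by linarith))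
  refine ⟨K0 ^ (1/s), 1 + 1/s, by nlinarith [one_div_pos.mpr hs0], ?_⟩
  intro a ha hRH hDoub k hk
  have hp1 : (1 + 1/s) - 1 = 1/s := by ring
  rw [hp1, one_div_one_div]
  -- goal : A * ((k⁻¹ * ∑ a^(-s)))^(1/s) ≤ K0^(1/s)
  have hk0 : (0:ℝ) < (k:ℝ) := by positivity
  have hsumpos : 0 < ∑ i ∈ Finset.range k, a i :=
    Finset.sum_pos (fun i _ => ha i) (Finset.nonempty_range_iff.mpr (by omega))
  set A : ℝ := (k:ℝ)⁻¹ * ∑ i ∈ Finset.range k, a i with hA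
  have hA0 : 0 < A := by rw [hA]; positivity
  have hβ0 : (0:ℝ) < (2*D)⁻¹ := by positivity
  have hβ1 : ((2*D):ℝ)⁻¹ < 1 := by
    rw [inv_lt_one_iff₀]; right; exact h2D1
  -- choose N
  have hne : ((Finset.range k).image a).Nonempty :=
    (Finset.nonempty_range_iff.mpr (by omega)).image a
  set ε₀ : ℝ := ((Finset.range k).image a).min' hne with hε₀def
  have hε₀pos : 0 < ε₀ := by
    obtain ⟨i, _, hi⟩ := Finset.mem_image.mp (Finset.min'_mem _ hne)
    rw [hε₀def, ← hi]
    exact ha i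
  have hε₀le : ∀ i ∈ Finset.range k, ε₀ ≤ a i := fun i hi =>
    Finset.min'_le _ _ (Finset.mem_image_of_mem a hi)
  obtain ⟨N, hN⟩ := exists_pow_lt_of_lt_one (div_pos hε₀pos hA0) hβ1
  have hlamN : ∀ i ∈ Finset.range k, A * ((2*D)⁻¹)^N < a i := by
    intro i hi
    calc A * ((2*D)⁻¹)^N < A * (ε₀/A) := by
          exact mul_lt_mul_of_pos_left hN hA0
      _ = ε₀ := by field_simp
      _ ≤ a i := hε₀le i hi
  classical
  -- pointwise claim
  have claim : ∀ i ∈ Finset.range k, a i ^ (-s) ≤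
      A^(-s) * (1 + (r-1) * ∑ n ∈ Finset.range N,
        (if a i ≤ A * ((2*D)⁻¹)^n then r^n else 0)) := by
    intro i hi
    have hex : ∃ n : ℕ, A * ((2*D)⁻¹)^n < a i := ⟨N, hlamN i hi⟩
    set Ni := Nat.find hex with hNi
    have h1 : A * ((2*D)⁻¹)^Ni < a i := Nat.find_spec hex
    have h2 : ∀ n < Ni, a i ≤ A * ((2*D)⁻¹)^n := fun n hn =>
      le_of_not_gt (Nat.find_min hex hn)
    have h3 : Ni ≤ N := Nat.find_le (hlamN i hi)
    have hlampos : 0 < A * ((2*D)⁻¹)^Ni := by positivity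
    have sa : a i ^ (-s) ≤ (A * ((2*D)⁻¹)^Ni) ^ (-s) :=
      Real.rpow_le_rpow_of_nonpos hlampos h1.le (by linarith)
    have sb : (A * ((2*D)⁻¹)^Ni) ^ (-s) = A^(-s) * r^Ni := by
      rw [Real.mul_rpow hA0.le (by positivity)]
      congr 1
      have e1 : ((2*D)⁻¹ : ℝ)^Ni = (2*D) ^ (-(Ni:ℝ)) := by
        rw [inv_pow, ← Real.rpow_natCast (2*D) Ni, ← Real.rpow_neg (by linarith)]
      rw [e1, ← Real.rpow_mul (by linarith : (0:ℝ) ≤ 2*D), neg_mul_neg,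
        mul_comm (Ni:ℝ) s, Real.rpow_mul (by linarith : (0:ℝ) ≤ 2*D),
        Real.rpow_natCast]
    have sc : (r:ℝ)^Ni = 1 + (r-1) * ∑ n ∈ Finset.range Ni, r^n := by
      have := mul_geom_sum r Ni
      linarith
    have sd : ∑ n ∈ Finset.range Ni, (r:ℝ)^n ≤
        ∑ n ∈ Finset.range N, (if a i ≤ A * ((2*D)⁻¹)^n then r^n else 0) := by
      have e2 : ∑ n ∈ Finset.range Ni, (r:ℝ)^n =
          ∑ n ∈ Finset.range Ni, (if a i ≤ A * ((2*D)⁻¹)^n then r^n else 0) :=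
        Finset.sum_congr rfl fun n hn => by
          rw [if_pos (h2 n (Finset.mem_range.mp hn))]
      rw [e2]
      apply Finset.sum_le_sum_of_subset_of_nonneg
        (Finset.range_subset_range.mpr h3)
      intro n _ _
      split
      · positivity
      · exact le_rfl
    calc a i ^ (-s) ≤ (A * ((2*D)⁻¹)^Ni) ^ (-s) := sa
      _ = A^(-s) * (1 + (r-1) * ∑ n ∈ Finset.range Ni, r^n) := by rw [sb, sc]
      _ ≤ A^(-s) * (1 + (r-1) * ∑ n ∈ Finset.range N,
            (if a i ≤ A * ((2*D)⁻¹)^n then r^n else 0)) := by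
          apply mul_le_mul_of_nonneg_left _ (Real.rpow_nonneg hA0.le _)
          have := mul_le_mul_of_nonneg_left sd (by linarith : (0:ℝ) ≤ r - 1)
          linarith
  -- swap the double sum
  have hswap : ∑ i ∈ Finset.range k, ∑ n ∈ Finset.range N,
      (if a i ≤ A * ((2*D)⁻¹)^n then r^n else 0) =
      ∑ n ∈ Finset.range N,
        (((Finset.range k).filter (fun i => a i ≤ A * ((2*D)⁻¹)^n)).card : ℝ) * r^n := by
    rw [Finset.sum_comm]
    refine Finset.sum_congr rfl fun n _ => ?_
    rw [← Finset.sum_filter, Finset.sum_const, nsmul_eq_mul]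
  have hcn : ∀ n : ℕ, (((Finset.range k).filter
      (fun i => a i ≤ A * ((2*D)⁻¹)^n)).card : ℝ) ≤ (1-η)^n * k := by
    intro n
    have := distribution a C q D hC hq hD ha hRH hDoub k hk n
    rw [← hA] at this
    rw [hηdef]
    exact this
  have hgeom : ∑ n ∈ Finset.range N, ρ^n ≤ (1-ρ)⁻¹ := by
    rw [geom_sum_eq (ne_of_lt hρ1)]
    rw [show (ρ^N - 1)/(ρ - 1) = (1 - ρ^N)/(1-ρ) by
      rw [← neg_div_neg_eq]; ring_nf]
    rw [← one_div, div_le_div_iff₀ h1ρ0 h1ρ0]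
    nlinarith [pow_nonneg hρ0 N]
  have hXsum : ∑ n ∈ Finset.range N,
      (((Finset.range k).filter (fun i => a i ≤ A * ((2*D)⁻¹)^n)).card : ℝ) * r^n ≤
      (k:ℝ) * (1-ρ)⁻¹ := by
    calc ∑ n ∈ Finset.range N, (((Finset.range k).filter
            (fun i => a i ≤ A * ((2*D)⁻¹)^n)).card : ℝ) * r^n
        ≤ ∑ n ∈ Finset.range N, ((1-η)^n * k) * r^n := by
          apply Finset.sum_le_sum
          intro n _
          exact mul_le_mul_of_nonneg_right (hcn n) (by positivity)
      _ = (k:ℝ) * ∑ n ∈ Finset.range N, ρ^n := by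
          rw [Finset.mul_sum]
          refine Finset.sum_congr rfl fun n _ => ?_
          rw [hρdef, mul_pow]
          ring
      _ ≤ (k:ℝ) * (1-ρ)⁻¹ := mul_le_mul_of_nonneg_left hgeom hk0.le
  -- total sum bound
  have hsum : ∑ i ∈ Finset.range k, a i ^ (-s) ≤ A^(-s) * ((k:ℝ) * K0) := by
    calc ∑ i ∈ Finset.range k, a i ^ (-s)
        ≤ ∑ i ∈ Finset.range k, A^(-s) * (1 + (r-1) * ∑ n ∈ Finset.range N,
            (if a i ≤ A * ((2*D)⁻¹)^n then r^n else 0)) := Finset.sum_le_sum claim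
      _ = A^(-s) * ((k:ℝ) + (r-1) * ∑ i ∈ Finset.range k, ∑ n ∈ Finset.range N,
            (if a i ≤ A * ((2*D)⁻¹)^n then r^n else 0)) := by
          rw [← Finset.mul_sum, Finset.sum_add_distrib, Finset.sum_const,
            nsmul_eq_mul, mul_one, ← Finset.mul_sum, Finset.card_range]
      _ ≤ A^(-s) * ((k:ℝ) + (r-1) * ((k:ℝ) * (1-ρ)⁻¹)) := by
          apply mul_le_mul_of_nonneg_left _ (Real.rpow_nonneg hA0.le _)
          rw [hswap]
          have := mul_le_mul_of_nonneg_left hXsum (by linarith : (0:ℝ) ≤ r - 1)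
          linarith [this]
      _ = A^(-s) * ((k:ℝ) * K0) := by
          have e : (k:ℝ) + (r-1) * ((k:ℝ) * (1-ρ)⁻¹) = (k:ℝ) * K0 := by
            rw [hK0def, div_eq_mul_inv]
            ring
          rw [e]
  have hfrac : (k:ℝ)⁻¹ * ∑ i ∈ Finset.range k, a i ^ (-s) ≤ K0 * A^(-s) := by
    have := mul_le_mul_of_nonneg_left hsum (inv_nonneg.mpr hk0.le)
    calc (k:ℝ)⁻¹ * ∑ i ∈ Finset.range k, a i ^ (-s)
        ≤ (k:ℝ)⁻¹ * (A^(-s) * ((k:ℝ) * K0)) := this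
      _ = K0 * A^(-s) := by
          rw [show (k:ℝ)⁻¹ * (A^(-s) * ((k:ℝ) * K0)) =
            ((k:ℝ)⁻¹ * (k:ℝ)) * (K0 * A^(-s)) by ring,
            inv_mul_cancel₀ (ne_of_gt hk0), one_mul]
  have hfracnn : 0 ≤ (k:ℝ)⁻¹ * ∑ i ∈ Finset.range k, a i ^ (-s) := by
    apply mul_nonneg (inv_nonneg.mpr hk0.le)
    exact Finset.sum_nonneg fun i _ => (Real.rpow_pos_of_pos (ha i) _).le
  calc A * ((k:ℝ)⁻¹ * ∑ i ∈ Finset.range k, a i ^ (-s)) ^ (1/s)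
      ≤ A * (K0 * A^(-s)) ^ (1/s) := by
        apply mul_le_mul_of_nonneg_left _ hA0.le
        exact Real.rpow_le_rpow hfracnn hfrac (by positivity)
    _ = A * (K0 ^ (1/s) * A⁻¹) := by
        rw [Real.mul_rpow (by linarith) (Real.rpow_nonneg hA0.le _),
          ← Real.rpow_mul hA0.le]
        congr 2
        rw [show (-s) * (1/s) = -1 by field_simp]
        exact Real.rpow_neg_one A
    _ = K0 ^ (1/s) := by
        rw [mul_comm (K0 ^ (1/s)) A⁻¹, ← mul_assoc, mul_inv_cancel₀ (ne_of_gt hA0), one_mul]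

open MeasureTheory in
lemma transfer_ae {X : Type*} [MeasurableSpace X] {μ : Measure X} {T : X → X}
    (hT : MeasurePreserving T μ μ) {P : X → Prop} (h : ∀ᵐ x ∂μ, P x) :
    ∀ᵐ x ∂μ, ∀ m : ℕ, P (T^[m] x) := by
  rw [MeasureTheory.ae_all_iff]
  intro m
  exact ((hT.iterate m).quasiMeasurePreserving).ae h



/-- `ω ∈ A_p` with constant `C`. -/
def MemAp {X : Type*} [MeasurableSpace X] (μ : Measure X) (T : X → X) (ω : X → ℝ)
    (p C : ℝ) : Prop :=
  ∀ᵐ x ∂μ, ∀ k : ℕ, 0 < k →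
    ((k : ℝ)⁻¹ * ∑ i ∈ Finset.range k, ω (T^[i] x)) *
      ((k : ℝ)⁻¹ * ∑ i ∈ Finset.range k, ω (T^[i] x) ^ (-(1 / (p - 1)))) ^ (p - 1) ≤ C

/-- `ω ∈ RH_q` with constant `C`. -/
def MemRH {X : Type*} [MeasurableSpace X] (μ : Measure X) (T : X → X) (ω : X → ℝ)
    (C q : ℝ) : Prop :=
  ∀ᵐ x ∂μ, ∀ k : ℕ, 0 < k →
    ((k : ℝ)⁻¹ * ∑ i ∈ Finset.range k, ω (T^[i] x) ^ q) ^ (1 / q) ≤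
      C * ((k : ℝ)⁻¹ * ∑ i ∈ Finset.range k, ω (T^[i] x))

/-- `g` satisfies the doubling condition. -/
def Doubling {X : Type*} [MeasurableSpace X] (μ : Measure X) (T : X → X) (g : X → ℝ) : Prop :=
  ∃ C : ℝ, ∀ᵐ x ∂μ, ∀ k : ℕ, 2 ≤ k →
    ((∑ j ∈ Finset.range ((k - 1) / 2 + 1), g (T^[j] x))⁻¹ *
        ∑ j ∈ Finset.range k, g (T^[j] x) ≤ C) ∧
    ((∑ j ∈ Finset.Ico ((k - 1) / 2 + 1) k, g (T^[j] x))⁻¹ *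
        ∑ j ∈ Finset.range k, g (T^[j] x) ≤ C)

theorem stmt19 {X : Type*} [MeasurableSpace X] (μ : Measure X)
    [IsProbabilityMeasure μ] [NullSingletonClass μ] (hcomp : μ.IsComplete)
    (T : X → X) (hTbij : Function.Bijective T) (hTerg : Ergodic T μ)
    (ω : X → ℝ) (hω : Measurable ω) (hωpos : ∀ x, 0 < ω x)
     :
    ((∃ p C : ℝ, 1 < p ∧ MemAp μ T ω p C) → Doubling μ T ω) ∧
    (Doubling μ T ω → (∃ C q : ℝ, 1 < C ∧ 1 < q ∧ MemRH μ T ω C q) →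
      ∃ C' p : ℝ, 1 < p ∧ MemAp μ T ω p C') := by
  constructor
  · -- (i)  A_p implies doubling
    rintro ⟨p, C, hp, hA⟩
    refine ⟨C * 4 ^ p, ?_⟩
    have hA' : ∀ᵐ x ∂μ, ∀ k : ℕ, 0 < k →
        ((k : ℝ)⁻¹ * ∑ i ∈ Finset.range k, ω (T^[i] x)) *
          ((k : ℝ)⁻¹ * ∑ i ∈ Finset.range k, ω (T^[i] x) ^ (-(1 / (p - 1)))) ^ (p - 1) ≤ C := hA
    filter_upwards [hA'] with x hx
    intro k hk
    constructor
    · exact part1_aux (fun i => ω (T^[i] x)) (fun i => hωpos _) p C hp hx k hk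
        (Finset.range ((k - 1) / 2 + 1))
        (by rw [Finset.range_subset_range]; omega)
        (by rw [Finset.card_range]; omega)
    · exact part1_aux (fun i => ω (T^[i] x)) (fun i => hωpos _) p C hp hx k hk
        (Finset.Ico ((k - 1) / 2 + 1) k)
        (by rw [Finset.range_eq_Ico]; exact Finset.Ico_subset_Ico (Nat.zero_le _) le_rfl)
        (by rw [Nat.card_Ico]; omega)
  · -- (ii)
    rintro ⟨Cd, hDoub⟩ ⟨C, q, hC, hq, hRH⟩
    have hD : (2:ℝ) ≤ max Cd 2 := le_max_right _ _
    obtain ⟨C', p, hp, hmain⟩ := part2_abstract C q (max Cd 2) hC hq hD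
    refine ⟨C', p, hp, ?_⟩
    have hRH' : ∀ᵐ x ∂μ, ∀ k : ℕ, 0 < k →
        ((k : ℝ)⁻¹ * ∑ i ∈ Finset.range k, ω (T^[i] x) ^ q) ^ (1 / q) ≤
          C * ((k : ℝ)⁻¹ * ∑ i ∈ Finset.range k, ω (T^[i] x)) := hRH
    have hDoub' : ∀ᵐ x ∂μ, ∀ k : ℕ, 2 ≤ k →
        ((∑ j ∈ Finset.range ((k - 1) / 2 + 1), ω (T^[j] x))⁻¹ *
            ∑ j ∈ Finset.range k, ω (T^[j] x) ≤ Cd) ∧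
        ((∑ j ∈ Finset.Ico ((k - 1) / 2 + 1) k, ω (T^[j] x))⁻¹ *
            ∑ j ∈ Finset.range k, ω (T^[j] x) ≤ Cd) := hDoub
    have hT : MeasurePreserving T μ μ := hTerg.toMeasurePreserving
    filter_upwards [transfer_ae hT hRH', transfer_ae hT hDoub'] with x hrh hdoub
    intro k hk
    set a : ℕ → ℝ := fun i => ω (T^[i] x) with ha_def
    have hiter : ∀ m i : ℕ, a (m + i) = ω (T^[i] (T^[m] x)) := by
      intro m i
      show ω (T^[m + i] x) = _
      rw [add_comm, Function.iterate_add_apply]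
    have esum : ∀ (m k : ℕ) (g : ℕ → ℝ),
        ∑ i ∈ Finset.Ico m (m + k), g i = ∑ i ∈ Finset.range k, g (m + i) := by
      intro m k g
      rw [Finset.sum_Ico_eq_sum_range, Nat.add_sub_cancel_left]
    -- abstract RH hypothesis
    have hRHa : ∀ m k : ℕ, 0 < k →
        ((k:ℝ)⁻¹ * ∑ i ∈ Finset.Ico m (m+k), a i ^ q) ^ (1/q) ≤
          C * ((k:ℝ)⁻¹ * ∑ i ∈ Finset.Ico m (m+k), a i) := by
      intro m k hk'
      rw [esum m k (fun i => a i ^ q), esum m k a]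
      simp only [hiter]
      exact hrh m k hk'
    -- abstract doubling hypothesis
    have hDba : ∀ m k : ℕ, 2 ≤ k →
        (∑ i ∈ Finset.Ico m (m+k), a i) ≤
          (max Cd 2) * ∑ i ∈ Finset.Ico m (m+((k-1)/2+1)), a i ∧
        (∑ i ∈ Finset.Ico m (m+k), a i) ≤
          (max Cd 2) * ∑ i ∈ Finset.Ico (m+((k-1)/2+1)) (m+k), a i := by
      intro m k hk'
      obtain ⟨hdl, hdr⟩ := hdoub m k hk'
      have hCdD : Cd ≤ max Cd 2 := le_max_left _ _
      have hLpos : 0 < ∑ j ∈ Finset.range ((k-1)/2+1), ω (T^[j] (T^[m] x)) :=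
        Finset.sum_pos (fun j _ => hωpos _) (Finset.nonempty_range_iff.mpr (by omega))
      have hRpos : 0 < ∑ j ∈ Finset.Ico ((k-1)/2+1) k, ω (T^[j] (T^[m] x)) :=
        Finset.sum_pos (fun j _ => hωpos _) (by rw [Finset.nonempty_Ico]; omega)
      have eL : ∑ i ∈ Finset.Ico m (m+((k-1)/2+1)), a i =
          ∑ j ∈ Finset.range ((k-1)/2+1), ω (T^[j] (T^[m] x)) := by
        rw [esum]
        exact Finset.sum_congr rfl fun j _ => hiter m j
      have eT : ∑ i ∈ Finset.Ico m (m+k), a i =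
          ∑ j ∈ Finset.range k, ω (T^[j] (T^[m] x)) := by
        rw [esum]
        exact Finset.sum_congr rfl fun j _ => hiter m j
      have eR : ∑ i ∈ Finset.Ico (m+((k-1)/2+1)) (m+k), a i =
          ∑ j ∈ Finset.Ico ((k-1)/2+1) k, ω (T^[j] (T^[m] x)) := by
        have e1 : ∑ i ∈ Finset.Ico (m+((k-1)/2+1)) (m+k), a i =
            ∑ j ∈ Finset.range (k - ((k-1)/2+1)), a (m + ((k-1)/2+1) + j) := by
          rw [Finset.sum_Ico_eq_sum_range,
            show (m+k) - (m+((k-1)/2+1)) = k - ((k-1)/2+1) by omega]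
        have e2 : ∑ j ∈ Finset.Ico ((k-1)/2+1) k, ω (T^[j] (T^[m] x)) =
            ∑ j ∈ Finset.range (k - ((k-1)/2+1)), ω (T^[(k-1)/2+1+j] (T^[m] x)) := by
          rw [Finset.sum_Ico_eq_sum_range]
        rw [e1, e2]
        refine Finset.sum_congr rfl fun j _ => ?_
        rw [show m + ((k-1)/2+1) + j = m + ((k-1)/2+1+j) by omega, hiter]
      constructor
      · rw [eT, eL]
        rw [inv_mul_le_iff₀ hLpos] at hdl
        calc ∑ j ∈ Finset.range k, ω (T^[j] (T^[m] x))
            ≤ (∑ j ∈ Finset.range ((k-1)/2+1), ω (T^[j] (T^[m] x))) * Cd := hdl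
          _ ≤ (∑ j ∈ Finset.range ((k-1)/2+1), ω (T^[j] (T^[m] x))) * (max Cd 2) :=
              mul_le_mul_of_nonneg_left hCdD hLpos.le
          _ = (max Cd 2) * ∑ j ∈ Finset.range ((k-1)/2+1), ω (T^[j] (T^[m] x)) :=
              mul_comm _ _
      · rw [eT, eR]
        rw [inv_mul_le_iff₀ hRpos] at hdr
        calc ∑ j ∈ Finset.range k, ω (T^[j] (T^[m] x))
            ≤ (∑ j ∈ Finset.Ico ((k-1)/2+1) k, ω (T^[j] (T^[m] x))) * Cd := hdr
          _ ≤ (∑ j ∈ Finset.Ico ((k-1)/2+1) k, ω (T^[j] (T^[m] x))) * (max Cd 2) :=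
              mul_le_mul_of_nonneg_left hCdD hRpos.le
          _ = (max Cd 2) * ∑ j ∈ Finset.Ico ((k-1)/2+1) k, ω (T^[j] (T^[m] x)) :=
              mul_comm _ _
    exact hmain a (fun i => hωpos _) hRHa hDba k hk
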